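/- For all x, z₁, z₂ ∈ ℝ and t, s > 0, writing z̄ = (z₁+z₂)/2 and Δz = z₁−z₂, one has G₁(t, x−z̄)·G₁(s, Δz) ≤ ((4t)∨s)/√(ts) · G₁((4t)∨s, x−z₁) · G₁((4t)∨s, x−z₂), where a∨b = max(a,b). -/

import Mathlib

noncomputable def heatKernel (ν t x : ℝ) : ℝ :=
  (1 / Real.sqrt (2 * Real.pi * ν * t)) * Real.exp (-(x ^ 2) / (2 * ν * t))

theorem stmt_5 (x z₁ z₂ t s : ℝ) (ht : 0 < t) (hs : 0 < s) :
    heatKernel 1 t (x - (z₁ + z₂) / 2) * heatKernel 1 s (z₁ - z₂) ≤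
      (max (4 * t) s / Real.sqrt (t * s)) *
        heatKernel 1 (max (4 * t) s) (x - z₁) *
        heatKernel 1 (max (4 * t) s) (x - z₂) := by
  set M := max (4 * t) s with hMdef
  have hM : 0 < M := lt_of_lt_of_le hs (le_max_right _ _)
  have h4t : 4 * t ≤ M := le_max_left _ _
  have hsM : s ≤ M := le_max_right _ _
  have hπ : (0:ℝ) < Real.pi := Real.pi_pos
  set A := x - (z₁ + z₂) / 2 with hA
  set B := z₁ - z₂ with hB
  set c := Real.sqrt (2 * Real.pi) with hc
  have sqt : Real.sqrt (2 * Real.pi * 1 * t) = c * Real.sqrt t := by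
    rw [hc, show 2 * Real.pi * 1 * t = (2 * Real.pi) * t by ring,
      Real.sqrt_mul (by positivity)]
  have sqs : Real.sqrt (2 * Real.pi * 1 * s) = c * Real.sqrt s := by
    rw [hc, show 2 * Real.pi * 1 * s = (2 * Real.pi) * s by ring,
      Real.sqrt_mul (by positivity)]
  have sqM : Real.sqrt (2 * Real.pi * 1 * M) = c * Real.sqrt M := by
    rw [hc, show 2 * Real.pi * 1 * M = (2 * Real.pi) * M by ring,
      Real.sqrt_mul (by positivity)]
  have sqts : Real.sqrt (t * s) = Real.sqrt t * Real.sqrt s :=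
    Real.sqrt_mul ht.le s
  have m2π : c * c = 2 * Real.pi := Real.mul_self_sqrt (by positivity)
  have mM : Real.sqrt M * Real.sqrt M = M := Real.mul_self_sqrt hM.le
  have hst : (0:ℝ) < Real.sqrt t := Real.sqrt_pos.mpr ht
  have hss : (0:ℝ) < Real.sqrt s := Real.sqrt_pos.mpr hs
  have hsM' : (0:ℝ) < Real.sqrt M := Real.sqrt_pos.mpr hM
  have hs2π : (0:ℝ) < c := Real.sqrt_pos.mpr (by positivity)
  have lhs_eq : heatKernel 1 t A * heatKernel 1 s B =
      (1 / (2 * Real.pi * (Real.sqrt t * Real.sqrt s))) *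
        Real.exp (-(A ^ 2) / (2 * t) + -(B ^ 2) / (2 * s)) := by
    simp only [heatKernel, sqt, sqs]
    rw [show (2:ℝ) * 1 * t = 2 * t by ring, show (2:ℝ) * 1 * s = 2 * s by ring,
      Real.exp_add]
    generalize Real.exp (-A ^ 2 / (2 * t)) = E₁
    generalize Real.exp (-B ^ 2 / (2 * s)) = E₂
    field_simp
    linear_combination (-(E₁ * E₂)) * m2π
  have rhs_eq : (M / Real.sqrt (t * s)) * heatKernel 1 M (x - z₁) * heatKernel 1 M (x - z₂) =
      (1 / (2 * Real.pi * (Real.sqrt t * Real.sqrt s))) *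
        Real.exp (-((x - z₁) ^ 2) / (2 * M) + -((x - z₂) ^ 2) / (2 * M)) := by
    simp only [heatKernel, sqM, sqts]
    rw [show (2:ℝ) * 1 * M = 2 * M by ring, Real.exp_add]
    generalize Real.exp (-(x - z₁) ^ 2 / (2 * M)) = E₁
    generalize Real.exp (-(x - z₂) ^ 2 / (2 * M)) = E₂
    field_simp
    linear_combination (-(E₁ * E₂ * (Real.sqrt M * Real.sqrt M))) * m2π -
        (2 * Real.pi * E₁ * E₂) * mM
  rw [lhs_eq, rhs_eq]
  apply mul_le_mul_of_nonneg_left _ (by positivity)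
  apply Real.exp_le_exp.mpr
  have key : (x - z₁) ^ 2 / (2 * M) + (x - z₂) ^ 2 / (2 * M) = A ^ 2 / M + B ^ 2 / (4 * M) := by
    rw [hA, hB]; field_simp; ring
  have h1 : A ^ 2 / M ≤ A ^ 2 / (2 * t) :=
    div_le_div_of_nonneg_left (by positivity) (by linarith) (by linarith)
  have h2 : B ^ 2 / (4 * M) ≤ B ^ 2 / (2 * s) :=
    div_le_div_of_nonneg_left (by positivity) (by linarith) (by linarith)
  simp only [neg_div]
  linarith [key, h1, h2]
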